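/- Let f : ℝ^d → ℝ have L_p-Lipschitz p-th derivative, and let y minimize w ↦ f_p(w, x) + (L_p/p!)‖w − x‖^{p+1}, where f_p is the p-th order Taylor expansion of f at x. If λ > 0 satisfies 1/2 ≤ λ L_p ‖y − x‖^{p−1}/(p−1)! ≤ p/(p+1), then ‖y − (x − λ∇f(y))‖ ≤ (1/2)‖y − x‖. -/

import Mathlib

open Function Finset

section Symm

variable {E : Type*} [NormedAddCommGroup E] [NormedSpace ℝ E]
  {F : Type*} [NormedAddCommGroup F] [NormedSpace ℝ F]

theorem iteratedFDeriv_update_swap :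
    ∀ (n : ℕ) (f : E → F), ContDiff ℝ n f → ∀ (x u v : E) (j k : Fin n),
      iteratedFDeriv ℝ n f x (Function.update (fun _ => u) j v) =
      iteratedFDeriv ℝ n f x (Function.update (fun _ => u) k v) := by
  intro n
  induction n using Nat.strong_induction_on with
  | _ n IH =>
  obtain _ | n := n
  · intro f hf x u v j k; exact j.elim0
  obtain _ | n := n
  · intro f hf x u v j k
    have hjk : j = k := @Subsingleton.elim (Fin 1) Fin.subsingleton_one j k
    rw [hjk]
  intro f hf x u v j k
  have hf2 : ContDiff ℝ 2 (iteratedFDeriv ℝ n f) := by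
    apply hf.iteratedFDeriv_right
    norm_cast
    omega
  set g := iteratedFDeriv ℝ n f with hgdef
  set B := fderiv ℝ (fderiv ℝ g) x with hBdef
  have hgd : ∀ z, HasFDerivAt g (fderiv ℝ g z) z := fun z =>
    (hf2.differentiable (by norm_num) z).hasFDerivAt
  have hgd2 : HasFDerivAt (fderiv ℝ g) B x :=
    ((hf2.fderiv_right (m := 1) (by norm_num)).differentiable one_ne_zero x).hasFDerivAt
  have hsymmB : ∀ a b, B a b = B b a := second_derivative_symmetric hgd hgd2
  have hrep : ∀ m : Fin (n+1+1) → E, iteratedFDeriv ℝ (n+1+1) f x m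
      = B (m 0) (m 1) (Fin.tail (Fin.tail m)) := by
    intro m
    rw [iteratedFDeriv_succ_apply_left]
    have h1 : iteratedFDeriv ℝ (n+1) f =
        (continuousMultilinearCurryLeftEquiv ℝ (fun _ : Fin (n + 1) => E) F).symm ∘
          fderiv ℝ (iteratedFDeriv ℝ n f) := iteratedFDeriv_succ_eq_comp_left
    have h2 := LinearIsometryEquiv.comp_fderiv (𝕜 := ℝ) (continuousMultilinearCurryLeftEquiv ℝ (fun _ : Fin (n+1) => E) F).symm
      (f := fderiv ℝ (iteratedFDeriv ℝ n f)) (x := x)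
    rw [h1, h2]
    rfl
  have hsucc : ∀ (a b : Fin (n+1)) (u v : E),
      iteratedFDeriv ℝ (n+1+1) f x (update (fun _ => u) a.succ v) =
      iteratedFDeriv ℝ (n+1+1) f x (update (fun _ => u) b.succ v) := by
    intro a b u v
    rw [iteratedFDeriv_succ_apply_left, iteratedFDeriv_succ_apply_left]
    have h0 : ∀ (c : Fin (n+1)), (update (fun _ : Fin (n+1+1) => u) c.succ v) 0 = u := by
      intro c; rw [Function.update_of_ne (Fin.succ_ne_zero c).symm]
    have htail : ∀ (c : Fin (n+1)), Fin.tail (update (fun _ : Fin (n+1+1) => u) c.succ v) =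
        update (fun _ : Fin (n+1) => u) c v := by
      intro c; funext i
      simp [Fin.tail, Function.update_apply, Fin.succ_inj]
    rw [h0, h0, htail, htail]
    set A := fderiv ℝ (iteratedFDeriv ℝ (n+1) f) x with hAdef
    set Ψ : ContinuousMultilinearMap ℝ (fun _ : Fin (n+1) => E) F →L[ℝ] F :=
      ContinuousMultilinearMap.apply ℝ (fun _ : Fin (n+1) => E) F (update (fun _ => u) a v) -
      ContinuousMultilinearMap.apply ℝ (fun _ : Fin (n+1) => E) F (update (fun _ => u) b v)
      with hΨdef
    have hfn1 : ContDiff ℝ (n+1) f := hf.of_le (by norm_cast; omega)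
    have hzero : ∀ z, Ψ (iteratedFDeriv ℝ (n+1) f z) = 0 := by
      intro z
      have h := IH (n+1) (by omega) f hfn1 z u v a b
      simp only [hΨdef, ContinuousLinearMap.sub_apply, ContinuousMultilinearMap.apply_apply]
      rw [h, sub_self]
    have hG : HasFDerivAt (iteratedFDeriv ℝ (n+1) f) A x := by
      have h2 : ContDiff ℝ 1 (iteratedFDeriv ℝ (n+1) f) := by
        apply hf.iteratedFDeriv_right; norm_cast; omega
      exact ((h2.differentiable one_ne_zero) x).hasFDerivAt
    have hcomp : HasFDerivAt (fun z => Ψ (iteratedFDeriv ℝ (n+1) f z)) (Ψ.comp A) x :=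
      (Ψ.hasFDerivAt).comp x hG
    have hPA : Ψ.comp A = 0 := by
      have h2 : (fun z => Ψ (iteratedFDeriv ℝ (n+1) f z)) = fun _ => (0:F) := funext hzero
      rw [h2] at hcomp
      exact hcomp.unique (hasFDerivAt_const 0 x)
    have h3 : Ψ (A u) = 0 := by
      have := ContinuousLinearMap.ext_iff.1 hPA u
      simpa using this
    have h4 := h3
    simp only [hΨdef, ContinuousLinearMap.sub_apply, ContinuousMultilinearMap.apply_apply] at h4
    exact sub_eq_zero.1 h4
  have h01 : ∀ u v : E,
      iteratedFDeriv ℝ (n+1+1) f x (update (fun _ => u) 0 v) =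
      iteratedFDeriv ℝ (n+1+1) f x (update (fun _ => u) 1 v) := by
    intro u v
    rw [hrep, hrep]
    have e00 : (update (fun _ : Fin (n+1+1) => u) 0 v) 0 = v := update_self _ _ _
    have e01 : (update (fun _ : Fin (n+1+1) => u) 0 v) 1 = u :=
      Function.update_of_ne one_ne_zero _ _
    have e10 : (update (fun _ : Fin (n+1+1) => u) 1 v) 0 = u :=
      Function.update_of_ne zero_ne_one _ _
    have e11 : (update (fun _ : Fin (n+1+1) => u) 1 v) 1 = v := update_self _ _ _
    have t0 : Fin.tail (Fin.tail (update (fun _ : Fin (n+1+1) => u) 0 v)) = fun _ => u := by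
      funext i
      simp [Fin.tail, Function.update_apply, Fin.succ_ne_zero]
    have t1 : Fin.tail (Fin.tail (update (fun _ : Fin (n+1+1) => u) 1 v)) = fun _ => u := by
      funext i
      simp [Fin.tail, Function.update_apply, Fin.succ_succ_ne_one]
    rw [e00, e01, e10, e11, t0, t1]
    exact congrArg (fun M => M (fun _ => u)) (hsymmB v u)
  have main : ∀ (jj : Fin (n+1+1)),
      iteratedFDeriv ℝ (n+1+1) f x (update (fun _ => u) jj v) =
      iteratedFDeriv ℝ (n+1+1) f x (update (fun _ => u) 1 v) := by
    intro jj
    refine Fin.cases ?_ ?_ jj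
    · exact h01 u v
    · intro a
      rw [← Fin.succ_zero_eq_one]
      exact hsucc a 0 u v
  rw [main j, main k]

theorem taylor_poly_hasFDerivAt (N : ℕ) (g : E → F)
    (hg : ContDiff ℝ N g) (x w : E) :
    HasFDerivAt (fun z => ∑ i ∈ Finset.range (N+1),
        ((i.factorial : ℝ)⁻¹) • iteratedFDeriv ℝ i g x (fun _ => z - x))
      (∑ j ∈ Finset.range N,
        ((j.factorial : ℝ)⁻¹) • (iteratedFDeriv ℝ j (fderiv ℝ g) x (fun _ => w - x))) w := by
  classical
  have hre : (fun z => ∑ i ∈ Finset.range (N+1),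
      ((i.factorial : ℝ)⁻¹) • iteratedFDeriv ℝ i g x (fun _ => z - x)) =
      fun z => (∑ j ∈ Finset.range N,
        (((j+1).factorial : ℝ)⁻¹) • iteratedFDeriv ℝ (j+1) g x (fun _ => z - x)) +
        ((Nat.factorial 0 : ℝ)⁻¹) • iteratedFDeriv ℝ 0 g x (fun _ => x - x) := by
    funext z
    rw [Finset.sum_range_succ']
    simp [iteratedFDeriv_zero_apply]
  rw [hre]
  apply HasFDerivAt.add_const
  apply HasFDerivAt.fun_sum
  intro j hj
  simp only [Finset.mem_range] at hj
  set M := iteratedFDeriv ℝ (j+1) g x with hM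
  have hdiag : HasFDerivAt (fun z => M (fun _ : Fin (j+1) => z - x))
      (∑ t : Fin (j+1), (M.toContinuousLinearMap (fun _ => w - x) t).comp
        (ContinuousLinearMap.id ℝ E)) w :=
    HasFDerivAt.multilinear_comp (f := M) (fun _ : Fin (j+1) => (hasFDerivAt_id w).sub_const x)
  have hD : (∑ t : Fin (j+1), (M.toContinuousLinearMap (fun _ => w - x) t).comp
        (ContinuousLinearMap.id ℝ E)) =
      (((j:ℝ)+1)) • (iteratedFDeriv ℝ j (fderiv ℝ g) x (fun _ => w - x)) := by
    ext v
    have hswap : ∀ t : Fin (j+1), M (update (fun _ => w - x) t v)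
        = M (update (fun _ => w - x) (Fin.last j) v) :=
      fun t => iteratedFDeriv_update_swap (j+1) g
        (hg.of_le (by exact_mod_cast hj)) x (w - x) v t (Fin.last j)
    have hlast : M (update (fun _ => w - x) (Fin.last j) v)
        = iteratedFDeriv ℝ j (fderiv ℝ g) x (fun _ => w - x) v := by
      rw [hM, iteratedFDeriv_succ_apply_right]
      have harg : Fin.init (update (fun _ : Fin (j+1) => w - x) (Fin.last j) v)
          = fun _ : Fin j => w - x := by
        funext i
        show (update (fun _ : Fin (j+1) => w - x) (Fin.last j) v) i.castSucc = w - x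
        exact Function.update_of_ne (Fin.castSucc_lt_last i).ne _ _
      rw [harg, update_self]
    simp only [ContinuousLinearMap.sum_apply, ContinuousLinearMap.coe_comp', Function.comp_apply,
      ContinuousLinearMap.coe_id', id_eq, ContinuousMultilinearMap.toContinuousLinearMap_apply,
      ContinuousLinearMap.smul_apply]
    rw [Finset.sum_congr rfl (fun t _ => (hswap t).trans hlast)]
    rw [Finset.sum_const, Finset.card_univ, Fintype.card_fin,
      ← Nat.cast_smul_eq_nsmul (R := ℝ)]
    congr 1
    push_cast
    ring
  have := (hdiag.const_smul (((j+1).factorial : ℝ)⁻¹))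
  rw [hD] at this
  refine this.congr_fderiv ?_
  rw [smul_smul]
  congr 1
  rw [Nat.factorial_succ]
  have hjf : (0:ℝ) < (j.factorial : ℝ) := by positivity
  push_cast
  field_simp

theorem lip_step {L : ℝ} (n : ℕ) (g : E → F)
    (h : ∀ u v, ‖iteratedFDeriv ℝ (n+1) g u - iteratedFDeriv ℝ (n+1) g v‖ ≤ L * ‖u - v‖) :
    ∀ u v, ‖iteratedFDeriv ℝ n (fderiv ℝ g) u - iteratedFDeriv ℝ n (fderiv ℝ g) v‖
      ≤ L * ‖u - v‖ := by
  intro a b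
  have key : ∀ z, iteratedFDeriv ℝ (n+1) g z =
      (continuousMultilinearCurryRightEquiv' ℝ n E F).symm
        (iteratedFDeriv ℝ n (fderiv ℝ g) z) :=
    fun z => iteratedFDeriv_succ_eq_comp_right
  have h2 := h a b
  rw [key a, key b, ← LinearIsometryEquiv.map_sub, LinearIsometryEquiv.norm_map] at h2
  exact h2

theorem taylor_remainder {E : Type} [NormedAddCommGroup E] [NormedSpace ℝ E] (L : ℝ)
    (hL : 0 ≤ L) (x : E) :
    ∀ (n : ℕ) (F : Type) [NormedAddCommGroup F] [NormedSpace ℝ F] (g : E → F),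
      ContDiff ℝ n g →
      (∀ u v, ‖iteratedFDeriv ℝ n g u - iteratedFDeriv ℝ n g v‖ ≤ L * ‖u - v‖) →
      ∀ y, ‖g y - ∑ i ∈ Finset.range (n+1), ((i.factorial : ℝ)⁻¹) •
          iteratedFDeriv ℝ i g x (fun _ => y - x)‖
        ≤ L / ((n+1).factorial : ℝ) * ‖y - x‖ ^ (n+1) := by
  intro n
  induction n with
  | zero =>
    intro F _ _ g hg hLip y
    have h0 : ∑ i ∈ Finset.range 1, ((i.factorial : ℝ)⁻¹) •
        iteratedFDeriv ℝ i g x (fun _ => y - x) = g x := by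
      simp [iteratedFDeriv_zero_apply]
    rw [h0]
    have h1 : ‖iteratedFDeriv ℝ 0 g y - iteratedFDeriv ℝ 0 g x‖ = ‖g y - g x‖ := by
      simp only [iteratedFDeriv_zero_eq_comp, Function.comp_apply, ← map_sub,
        LinearIsometryEquiv.norm_map]
    have h2 := hLip y x
    rw [h1] at h2
    simpa using h2
  | succ n IH =>
    intro F _ _ g hg hLip y
    have hg' : ContDiff ℝ n (fderiv ℝ g) := hg.fderiv_right (by norm_cast)
    have hLip' := lip_step n g hLip
    have hIH := IH (E →L[ℝ] F) (fderiv ℝ g) hg' hLip'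
    set P : E → F := fun z => ∑ i ∈ Finset.range (n+1+1), ((i.factorial : ℝ)⁻¹) •
      iteratedFDeriv ℝ i g x (fun _ => z - x) with hP
    have hR : ∀ w, HasFDerivAt (fun z => g z - P z)
        (fderiv ℝ g w - ∑ j ∈ Finset.range (n+1), ((j.factorial : ℝ)⁻¹) •
          iteratedFDeriv ℝ j (fderiv ℝ g) x (fun _ => w - x)) w := by
      intro w
      exact ((hg.differentiable (by exact_mod_cast Nat.succ_ne_zero n)
        w).hasFDerivAt).sub (taylor_poly_hasFDerivAt (n+1) g hg x w)
    set u : E := y - x with hu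
    set C : ℝ := L / ((n+1).factorial : ℝ) * ‖u‖ ^ (n+1+1) with hC
    have hC0 : 0 ≤ C := by positivity
    set φ : ℝ → F := fun t => g (x + t • u) - P (x + t • u) with hφdef
    have hline : ∀ t : ℝ, HasDerivAt (fun s : ℝ => x + s • u) u t := by
      intro t
      simpa using ((hasDerivAt_id t).smul_const u).const_add x
    have hφ : ∀ t, HasDerivAt φ
        ((fderiv ℝ g (x + t • u) - ∑ j ∈ Finset.range (n+1), ((j.factorial : ℝ)⁻¹) •
          iteratedFDeriv ℝ j (fderiv ℝ g) x (fun _ => (x + t • u) - x)) u) t :=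
      fun t => by have := (hR (x + t • u)).comp_hasDerivAt t (hline t); exact this
    have hbound : ∀ t ∈ Set.Ico (0:ℝ) 1,
        ‖(fderiv ℝ g (x + t • u) - ∑ j ∈ Finset.range (n+1), ((j.factorial : ℝ)⁻¹) •
          iteratedFDeriv ℝ j (fderiv ℝ g) x (fun _ => (x + t • u) - x)) u‖
        ≤ C * t ^ (n+1) := by
      intro t ht
      have h1 := hIH (x + t • u)
      have h2 : ‖(x + t • u) - x‖ = t * ‖u‖ := by
        rw [add_sub_cancel_left, norm_smul, Real.norm_eq_abs, abs_of_nonneg ht.1]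
      calc ‖_‖ ≤ ‖fderiv ℝ g (x + t • u) - ∑ j ∈ Finset.range (n+1), ((j.factorial : ℝ)⁻¹) •
              iteratedFDeriv ℝ j (fderiv ℝ g) x (fun _ => (x + t • u) - x)‖ * ‖u‖ :=
            ContinuousLinearMap.le_opNorm _ u
        _ ≤ (L / ((n+1).factorial : ℝ) * ‖(x + t • u) - x‖ ^ (n+1)) * ‖u‖ := by
            gcongr
        _ = C * t ^ (n+1) := by
            rw [h2, hC, mul_pow, pow_succ ‖u‖ (n+1)]
            ring
    set B : ℝ → ℝ := fun t => C / ((n:ℝ)+2) * t ^ (n+1+1) with hB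
    have hB' : ∀ t, HasDerivAt B (C * t ^ (n+1)) t := by
      intro t
      have := (hasDerivAt_pow (n+1+1) t).const_mul (C / ((n:ℝ)+2))
      refine this.congr_deriv ?_
      have : (0:ℝ) < (n:ℝ) + 2 := by positivity
      rw [Nat.add_sub_cancel]; push_cast; field_simp
      ring
    have key := image_norm_le_of_norm_deriv_right_le_deriv_boundary
      (f := fun t => φ t - φ 0) (a := 0) (b := 1)
      (fun t _ => (((hφ t).sub_const (φ 0)).continuousAt).continuousWithinAt)
      (fun t _ => ((hφ t).sub_const (φ 0)).hasDerivWithinAt)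
      (by simp [hB]) hB' hbound (Set.right_mem_Icc.2 (by norm_num : (0:ℝ) ≤ 1))
    have hφ1 : φ 1 = g y - P y := by
      simp [hφdef, hu]
    have hφ0 : φ 0 = 0 := by
      have hPx : P x = g x := by
        simp only [hP]
        rw [Finset.sum_eq_single_of_mem 0 (Finset.mem_range.2 (by omega))]
        · simp [iteratedFDeriv_zero_apply]
        · intro b _ hb
          obtain ⟨m, rfl⟩ := Nat.exists_eq_succ_of_ne_zero hb
          have : iteratedFDeriv ℝ (m+1) g x (fun _ => x - x) = 0 := by
            have : (fun _ : Fin (m+1) => x - x) 0 = 0 := by simp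
            exact ContinuousMultilinearMap.map_coord_zero _ 0 this
          rw [this, smul_zero]
      simp only [hφdef, zero_smul, add_zero, hPx, sub_self]
    simp only [hφ1, hφ0, sub_zero] at key
    have hBval : B 1 = L / ((n+1+1).factorial : ℝ) * ‖u‖ ^ (n+1+1) := by
      simp only [hB, hC]
      rw [one_pow, mul_one, Nat.factorial_succ (n+1)]
      have h1 : (0:ℝ) < ((n+1).factorial : ℝ) := by positivity
      have h2 : (0:ℝ) < (n:ℝ) + 2 := by positivity
      field_simp
      push_cast
      ring
    rw [hBval] at key
    exact key

end Symm

theorem hasFDerivAt_norm_pow {E : Type*} [NormedAddCommGroup E] [InnerProductSpace ℝ E]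
    (k : ℕ) (hk : 1 ≤ k) (x y : E) :
    HasFDerivAt (fun w : E => ‖w - x‖ ^ (k+1))
      ((((k:ℝ)+1) * ‖y - x‖^(k-1)) • (innerSL ℝ (y - x))) y := by
  have hq : HasFDerivAt (fun w : E => (inner ℝ (w-x) (w-x) : ℝ)) ((2:ℝ) • innerSL ℝ (y-x)) y := by
    have h1 : HasFDerivAt (fun w : E => w - x) (ContinuousLinearMap.id ℝ E) y :=
      (hasFDerivAt_id y).sub_const x
    have h2 := h1.inner ℝ h1
    refine h2.congr_fderiv ?_
    ext v
    simp only [ContinuousLinearMap.smul_apply, innerSL_apply_apply, ContinuousLinearMap.comp_apply,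
      ContinuousLinearMap.prod_apply, fderivInnerCLM_apply, ContinuousLinearMap.coe_id', id_eq,
      smul_eq_mul]
    rw [real_inner_comm v (y - x)]
    ring
  have hpow : ∀ (a : ℝ), 0 ≤ a → ∀ m : ℕ, (a^2 : ℝ) ^ (((m:ℝ))/2) = a ^ m := by
    intro a ha m
    rw [← Real.rpow_natCast a 2, ← Real.rpow_natCast a m, ← Real.rpow_mul ha]
    congr 1
    push_cast
    ring
  have hrw : (fun w : E => ‖w - x‖ ^ (k+1)) =
      fun w => (inner ℝ (w-x) (w-x) : ℝ) ^ ((((k:ℝ)+1))/2) := by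
    funext w
    rw [real_inner_self_eq_norm_sq]
    rw [show ((k:ℝ)+1) = (((k+1:ℕ)):ℝ) by push_cast; ring]
    rw [hpow _ (norm_nonneg _) (k+1)]
  rw [hrw]
  have h1half : (1:ℝ) ≤ ((k:ℝ)+1)/2 := by
    have : (1:ℝ) ≤ (k:ℝ) := by exact_mod_cast hk
    linarith
  have hd := (Real.hasDerivAt_rpow_const
    (x := (inner ℝ (y-x) (y-x) : ℝ)) (p := ((k:ℝ)+1)/2) (Or.inr h1half)).comp_hasFDerivAt y hq
  refine hd.congr_fderiv ?_
  rw [smul_smul]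
  congr 1
  rw [real_inner_self_eq_norm_sq]
  have hexp : ((k:ℝ)+1)/2 - 1 = (((k-1:ℕ)):ℝ)/2 := by
    rw [Nat.cast_sub hk]
    push_cast
    ring
  rw [hexp, hpow _ (norm_nonneg _) (k-1)]
  ring

set_option maxHeartbeats 1000000 in
/-- ATD step is an implicit gradient step: if `y` minimizes the regularized Taylor
expansion and `λ` satisfies the bracketing condition, then
`‖y - (x - λ∇f(y))‖ ≤ (1/2)‖y - x‖`. -/
theorem atd_implicit_gradient_step (d p : ℕ) (hp : 1 ≤ p) (L lam : ℝ) (hL : 0 < L)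
    (hlam : 0 < lam) (f : EuclideanSpace ℝ (Fin d) → ℝ)
    (hf : ContDiff ℝ p f)
    (hLip : ∀ u v, ‖iteratedFDeriv ℝ p f u - iteratedFDeriv ℝ p f v‖ ≤ L * ‖u - v‖)
    (x y : EuclideanSpace ℝ (Fin d))
    (fp : EuclideanSpace ℝ (Fin d) → ℝ)
    (hfp : ∀ w, fp w = ∑ i ∈ Finset.range (p + 1),
      (1 / (Nat.factorial i : ℝ)) * iteratedFDeriv ℝ i f x (fun _ => w - x))
    (hy : ∀ w, fp y + (L / (Nat.factorial p : ℝ)) * ‖y - x‖ ^ (p + 1) ≤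
      fp w + (L / (Nat.factorial p : ℝ)) * ‖w - x‖ ^ (p + 1))
    (hlow : 1 / 2 ≤ lam * L * ‖y - x‖ ^ (p - 1) / (Nat.factorial (p - 1) : ℝ))
    (hhigh : lam * L * ‖y - x‖ ^ (p - 1) / (Nat.factorial (p - 1) : ℝ) ≤ (p : ℝ) / (p + 1)) :
    ‖y - (x - lam • gradient f y)‖ ≤ (1 / 2) * ‖y - x‖ := by
  obtain ⟨q, rfl⟩ : ∃ q, p = q + 1 := ⟨p - 1, (Nat.succ_pred_eq_of_pos hp).symm⟩
  simp only [Nat.add_sub_cancel] at hlow hhigh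
  push_cast at hhigh
  have hg' : ContDiff ℝ q (fderiv ℝ f) := hf.fderiv_right (by norm_cast)
  have hLip' := lip_step q f hLip
  have htay := taylor_remainder L hL.le x q _ (fderiv ℝ f) hg' hLip' y
  set u : EuclideanSpace ℝ (Fin d) := y - x with hu
  set T : EuclideanSpace ℝ (Fin d) →L[ℝ] ℝ := ∑ j ∈ Finset.range (q+1),
    ((j.factorial : ℝ)⁻¹) • iteratedFDeriv ℝ j (fderiv ℝ f) x (fun _ => u) with hT
  have hfpd : HasFDerivAt fp T y := by
    have h1 : fp = fun z => ∑ i ∈ Finset.range (q+1+1),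
        ((i.factorial : ℝ)⁻¹) • iteratedFDeriv ℝ i f x (fun _ => z - x) := by
      funext z
      rw [hfp z]
      refine Finset.sum_congr rfl fun i _ => ?_
      rw [smul_eq_mul, one_div]
    rw [h1]
    exact taylor_poly_hasFDerivAt (q+1) f hf x y
  set κ : ℝ := (L / ((q+1).factorial : ℝ)) * (((q:ℝ)+2) * ‖u‖^q) with hκ
  have hnp2 : HasFDerivAt (fun w : EuclideanSpace ℝ (Fin d) =>
      (L / ((q+1).factorial : ℝ)) * ‖w - x‖ ^ (q+1+1)) (κ • innerSL ℝ u) y := by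
    have h2 := (hasFDerivAt_norm_pow (q+1) (Nat.le_add_left 1 q) x y).const_mul
      (L / ((q+1).factorial : ℝ))
    refine h2.congr_fderiv ?_
    rw [hκ, smul_smul]
    congr 1
    simp only [Nat.add_sub_cancel]
    push_cast
    ring
  have hmin : IsLocalMin (fun w => fp w +
      (L / ((q+1).factorial : ℝ)) * ‖w - x‖ ^ (q+1+1)) y :=
    Filter.Eventually.of_forall hy
  have hFd : HasFDerivAt (fun w => fp w +
      (L / ((q+1).factorial : ℝ)) * ‖w - x‖ ^ (q+1+1)) (T + κ • innerSL ℝ u) y :=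
    hfpd.add hnp2
  have h0 : T + κ • innerSL ℝ u = 0 := by
    rw [← hFd.fderiv]
    exact hmin.fderiv_eq_zero
  have hTκ : T = -(κ • innerSL ℝ u) := eq_neg_of_add_eq_zero_left h0
  set g0 := gradient f y with hg0
  have htd : (InnerProductSpace.toDual ℝ (EuclideanSpace ℝ (Fin d))) g0 = fderiv ℝ f y :=
    (InnerProductSpace.toDual ℝ (EuclideanSpace ℝ (Fin d))).apply_symm_apply (fderiv ℝ f y)
  have hTd : (InnerProductSpace.toDual ℝ (EuclideanSpace ℝ (Fin d))) (-(κ • u)) = T := by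
    rw [hTκ]
    ext v
    simp [inner_smul_left, innerSL_apply_apply, InnerProductSpace.toDual_apply_apply]
  have hnorm1 : ‖fderiv ℝ f y - T‖ = ‖g0 + κ • u‖ := by
    rw [← htd, ← hTd, ← LinearIsometryEquiv.map_sub, LinearIsometryEquiv.norm_map,
      sub_neg_eq_add]
  have hbound : ‖g0 + κ • u‖ ≤ (L / ((q+1).factorial : ℝ)) * ‖u‖ ^ (q+1) := by
    rw [← hnorm1]
    exact htay
  have hrewrite : y - (x - lam • g0) = (1 - lam*κ) • u + lam • (g0 + κ • u) := by
    rw [hu]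
    module
  set r : ℝ := lam * L * ‖u‖^q / (q.factorial : ℝ) with hr
  have hq1 : (0:ℝ) < (q:ℝ) + 1 := by positivity
  have hfq : ((q+1).factorial : ℝ) = ((q:ℝ)+1) * (q.factorial : ℝ) := by
    rw [Nat.factorial_succ]; push_cast; ring
  have hfq0 : (0:ℝ) < (q.factorial : ℝ) := by positivity
  have hκval : lam * κ = r * ((q:ℝ)+2) / ((q:ℝ)+1) := by
    rw [hκ, hr, hfq]
    field_simp
  have hcval : lam * ((L / ((q+1).factorial : ℝ)) * ‖u‖^(q+1)) = r * ‖u‖ / ((q:ℝ)+1) := by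
    rw [hr, hfq, pow_succ]
    field_simp
  have hhigh' : r * ((q:ℝ)+2) ≤ (q:ℝ)+1 := by
    have h2 : (0:ℝ) < (q:ℝ)+2 := by positivity
    have h3 : r ≤ ((q:ℝ)+1)/((q:ℝ)+2) := by
      convert hhigh using 2
      ring
    calc r * ((q:ℝ)+2) ≤ (((q:ℝ)+1)/((q:ℝ)+2)) * ((q:ℝ)+2) :=
          mul_le_mul_of_nonneg_right h3 h2.le
      _ = (q:ℝ)+1 := by field_simp
  have hκ1 : lam * κ ≤ 1 := by
    rw [hκval, div_le_one hq1]
    linarith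
  calc ‖y - (x - lam • g0)‖ = ‖(1 - lam*κ) • u + lam • (g0 + κ • u)‖ := by rw [hrewrite]
    _ ≤ ‖(1 - lam*κ) • u‖ + ‖lam • (g0 + κ • u)‖ := norm_add_le _ _
    _ = (1 - lam*κ) * ‖u‖ + lam * ‖g0 + κ • u‖ := by
        rw [norm_smul, norm_smul, Real.norm_eq_abs, Real.norm_eq_abs,
          abs_of_nonneg (by linarith), abs_of_pos hlam]
    _ ≤ (1 - lam*κ) * ‖u‖ + lam * ((L / ((q+1).factorial : ℝ)) * ‖u‖ ^ (q+1)) := by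
        gcongr
    _ ≤ (1/2) * ‖u‖ := by
        rw [hκval, hcval]
        have hexp : (1 - r*((q:ℝ)+2)/((q:ℝ)+1)) * ‖u‖ + r*‖u‖/((q:ℝ)+1) = (1-r)*‖u‖ := by
          field_simp
          ring
        rw [hexp]
        nlinarith [mul_nonneg (by linarith [hlow] : (0:ℝ) ≤ r - 1/2) (norm_nonneg u)]
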